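/- Let A be a commutative ring and 𝔞 ⊆ A an ideal. Then Tor_n^A(A/𝔞, A/𝔞) = 0 for all n ≥ 1 (i.e. 𝔞 is strongly idempotent) if and only if Ext^n_A(A/𝔞, Hom_A(A/𝔞, E)) = 0 for every injective A-module E and every n ≥ 1 (i.e. the torsion class T_𝔞 of modules annihilated by 𝔞 is weakly stable). -/

import Mathlib

open CategoryTheory CategoryTheory.Limits

universe u

/-- Exactness at the middle of a pair of composable maps of modules is equivalent to
exactness of the associated `Hom(-, E)` sequences for all injective modules `E`. -/
lemma exact_iff_hom_inj {A : Type u} [CommRing A] {X₁ X₂ X₃ : ModuleCat.{u} A}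
    (f : X₁ ⟶ X₂) (g : X₂ ⟶ X₃) :
    (∀ x₂ : X₂, g x₂ = 0 → ∃ x₁, f x₁ = x₂) ↔
      (∀ E : ModuleCat.{u} A, Injective E →
        ∀ φ : X₂ ⟶ E, (∀ x, φ (f x) = 0) → ∃ ψ : X₃ ⟶ E, ∀ x, ψ (g x) = φ x) := by
  constructor
  · intro hex E hE φ hφ
    set K := LinearMap.ker g.hom with hK
    have hKφ : K ≤ LinearMap.ker φ.hom := by
      intro x hx
      obtain ⟨y, rfl⟩ := hex x hx
      simpa using hφ y
    let Q : ModuleCat.{u} A := ModuleCat.of A (X₂ ⧸ K)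
    let φbar : Q ⟶ E := ModuleCat.ofHom (K.liftQ φ.hom hKφ)
    let gbar : Q ⟶ X₃ := ModuleCat.ofHom (K.liftQ g.hom le_rfl)
    have hginj : Function.Injective gbar := by
      change Function.Injective (K.liftQ g.hom le_rfl)
      rw [← LinearMap.ker_eq_bot]
      exact Submodule.ker_liftQ_eq_bot _ _ _ le_rfl
    have : Mono gbar := (ModuleCat.mono_iff_injective _).2 hginj
    obtain ⟨ψ, hψ⟩ := hE.factors φbar gbar
    refine ⟨ψ, fun x => ?_⟩
    have h1 : gbar (Submodule.Quotient.mk x) = g x := Submodule.liftQ_apply _ _ _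
    have h2 : φbar (Submodule.Quotient.mk x) = φ x := Submodule.liftQ_apply _ _ _
    calc ψ (g x) = ψ (gbar (Submodule.Quotient.mk x)) := by rw [h1]
      _ = (gbar ≫ ψ) (Submodule.Quotient.mk x) := rfl
      _ = φ x := by rw [hψ]; exact h2
  · intro h x₂ hx₂
    let Q : ModuleCat.{u} A := ModuleCat.of A (X₂ ⧸ LinearMap.range f.hom)
    let π : X₂ ⟶ Q := ModuleCat.ofHom (LinearMap.range f.hom).mkQ
    let E := Injective.under Q
    let ι : Q ⟶ E := Injective.ι Q
    obtain ⟨ψ, hψ⟩ := h E inferInstance (π ≫ ι) (fun x => by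
      have : π (f x) = 0 := by
        show (LinearMap.range f.hom).mkQ (f x) = 0
        rw [Submodule.mkQ_apply, Submodule.Quotient.mk_eq_zero]
        exact LinearMap.mem_range_self _ x
      show ι (π (f x)) = 0
      rw [this, map_zero])
    have h0 : ι (π x₂) = 0 := by
      have := hψ x₂
      rw [hx₂, map_zero] at this
      exact this.symm
    have hιinj : Function.Injective ι := (ModuleCat.mono_iff_injective ι).1 inferInstance
    have : π x₂ = 0 := hιinj (by simpa using h0)
    have : x₂ ∈ LinearMap.range f.hom := by
      rwa [← Submodule.Quotient.mk_eq_zero]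
    exact this

set_option maxHeartbeats 1000000 in
/-- Let `A` be a commutative ring and `𝔞 ⊆ A` an ideal.  Then `Tor_n^A(A/𝔞, A/𝔞) = 0` for all
`n ≥ 1` (i.e. `𝔞` is strongly idempotent) if and only if
`Ext^n_A(A/𝔞, Hom_A(A/𝔞, E)) = 0` for every injective `A`-module `E` and every `n ≥ 1`
(i.e. the torsion class `T_𝔞` of modules annihilated by `𝔞` is weakly stable). -/
theorem strongly_idempotent_iff_weakly_stable
    (A : Type u) [CommRing A] (𝔞 : Ideal A) :
    (∀ n : ℕ, 1 ≤ n →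
      IsZero (((Tor (ModuleCat.{u} A) n).obj (ModuleCat.of A (A ⧸ 𝔞))).obj
        (ModuleCat.of A (A ⧸ 𝔞)))) ↔
    (∀ E : ModuleCat.{u} A, Injective E → ∀ n : ℕ, 1 ≤ n →
      IsZero (((Ext A (ModuleCat.{u} A) n).obj (Opposite.op (ModuleCat.of A (A ⧸ 𝔞)))).obj
        (ModuleCat.of A ((A ⧸ 𝔞) →ₗ[A] E)))) := by
  set N : ModuleCat.{u} A := ModuleCat.of A (A ⧸ 𝔞) with hNdef
  obtain ⟨P⟩ : Nonempty (ProjectiveResolution N) := HasProjectiveResolution.out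
  set F : ModuleCat.{u} A ⥤ ModuleCat.{u} A :=
    (MonoidalCategory.tensoringLeft (ModuleCat.{u} A)).obj N with hFdef
  set T : ChainComplex (ModuleCat.{u} A) ℕ :=
    (F.mapHomologicalComplex _).obj P.complex with hTdef
  have key : ∀ m : ℕ,
      IsZero (((Tor (ModuleCat.{u} A) (m+1)).obj N).obj N) ↔
        ∀ E : ModuleCat.{u} A, Injective E →
          IsZero (((Ext A (ModuleCat.{u} A) (m+1)).obj (Opposite.op N)).obj
            (ModuleCat.of A ((A ⧸ 𝔞) →ₗ[A] E))) := by
    intro m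
    have eTor : ((Tor (ModuleCat.{u} A) (m+1)).obj N).obj N ≅ T.homology (m+1) :=
      P.isoLeftDerivedObj F (m+1)
    rw [eTor.isZero_iff, ← HomologicalComplex.exactAt_iff_isZero_homology,
      T.exactAt_iff' (m+2) (m+1) m (by simp) (by simp),
      ShortComplex.moduleCat_exact_iff,
      exact_iff_hom_inj ((T.sc' (m+2) (m+1) m).f) ((T.sc' (m+2) (m+1) m).g)]
    refine forall_congr' fun E => imp_congr_right fun hE => ?_
    haveI := hE
    set YE : ModuleCat.{u} A := ModuleCat.of A ((A ⧸ 𝔞) →ₗ[A] E) with hYEdef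
    have eExt : ((Ext A (ModuleCat.{u} A) (m+1)).obj (Opposite.op N)).obj YE ≅
        (P.complex.linearYonedaObj A YE).homology (m+1) := P.isoExt (m+1) YE
    rw [eExt.isZero_iff, ← HomologicalComplex.exactAt_iff_isZero_homology,
      (P.complex.linearYonedaObj A YE).exactAt_iff' m (m+1) (m+2) (by simp) (by simp),
      ShortComplex.moduleCat_exact_iff]
    -- Now both sides are concrete statements; transfer via the tensor-hom adjunction.
    constructor
    · -- Hom(T, E) exactness implies linearYoneda exactness
      intro h χ₀ hχ
      let χ : P.complex.X (m+1) ⟶ YE := χ₀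
      -- χ : P.complex.X (m+1) ⟶ YE with d ∘ χ = 0
      have hχ' : P.complex.d (m+2) (m+1) ≫ χ = 0 := by
        exact hχ
      obtain ⟨ψ, hψ⟩ := h (ModuleCat.ofHom (TensorProduct.lift
          (LinearMap.flip χ.hom)) :
            T.X (m+1) ⟶ E) (fun x => by
        have hmap : ((TensorProduct.lift (LinearMap.flip
            χ.hom)) ∘ₗ
              (MonoidalCategory.whiskerLeft N (P.complex.d (m+2) (m+1)) :
                T.X (m+2) ⟶ T.X (m+1)).hom) = 0 := by
          apply TensorProduct.ext'
          intro n p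
          have hz : χ (P.complex.d (m+2) (m+1) p) = 0 := by
            have := congrArg (fun u => u p) hχ'
            simpa using this
          simp only [LinearMap.comp_apply, LinearMap.zero_apply]
          have hw : (MonoidalCategory.whiskerLeft N (P.complex.d (m+2) (m+1)) :
              T.X (m+2) ⟶ T.X (m+1)) (n ⊗ₜ[A] p) =
              n ⊗ₜ[A] (P.complex.d (m+2) (m+1) p) := rfl
          exact (congrArg (TensorProduct.lift (LinearMap.flip
            χ.hom)) hw).trans
            (by
              simp only [TensorProduct.lift.tmul, LinearMap.flip_apply]
              exact (LinearMap.congr_fun hz n).trans rfl)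
        have := congrArg (fun u => u x) hmap
        exact this)
      refine ⟨ModuleCat.ofHom (TensorProduct.curry ψ.hom).flip, ?_⟩
      -- show : (sc').f applied equals χ
      show P.complex.d (m+1) m ≫ ModuleCat.ofHom (TensorProduct.curry ψ.hom).flip = χ₀
      apply ModuleCat.hom_ext; apply LinearMap.ext; intro p
      apply LinearMap.ext; intro n
      have h1 : ψ ((MonoidalCategory.whiskerLeft N (P.complex.d (m+1) m) :
          T.X (m+1) ⟶ T.X m) (n ⊗ₜ[A] p)) =
          TensorProduct.lift (LinearMap.flip χ.hom)
            (n ⊗ₜ[A] p) := hψ (n ⊗ₜ[A] p)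
      rw [ModuleCat.MonoidalCategory.whiskerLeft_apply] at h1
      exact h1
    · -- linearYoneda exactness implies Hom(T, E) exactness
      intro h φ hφ
      -- φ : T.X (m+1) ⟶ E
      set χ : P.complex.X (m+1) ⟶ YE :=
        ModuleCat.ofHom (TensorProduct.curry φ.hom).flip with hχdef
      have hχ : P.complex.d (m+2) (m+1) ≫ χ = 0 := by
        apply ModuleCat.hom_ext; apply LinearMap.ext; intro q
        apply LinearMap.ext; intro n
        have : φ ((MonoidalCategory.whiskerLeft N (P.complex.d (m+2) (m+1)) :
            T.X (m+2) ⟶ T.X (m+1)) (n ⊗ₜ[A] q)) = 0 := hφ (n ⊗ₜ[A] q)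
        erw [ModuleCat.MonoidalCategory.whiskerLeft_apply] at this
        exact this
      obtain ⟨ξ₀, hξ⟩ := h χ (by
        exact hχ)
      let ξ : P.complex.X m ⟶ YE := ξ₀
      have hξ' : P.complex.d (m+1) m ≫ ξ = χ := by
        exact hξ
      refine ⟨(ModuleCat.ofHom (TensorProduct.lift (LinearMap.flip ξ.hom)) :
        T.X m ⟶ E), ?_⟩
      intro x
      have hmap : ((TensorProduct.lift (LinearMap.flip ξ.hom)) ∘ₗ
          (MonoidalCategory.whiskerLeft N (P.complex.d (m+1) m) :
            T.X (m+1) ⟶ T.X m).hom) = φ.hom := by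
        apply TensorProduct.ext'
        intro n p
        have h2 : ξ (P.complex.d (m+1) m p) = χ p := by
          have := congrArg (fun u => u p) hξ'
          simpa using this
        simp only [LinearMap.comp_apply]
        have hw : (MonoidalCategory.whiskerLeft N (P.complex.d (m+1) m) :
            T.X (m+1) ⟶ T.X m) (n ⊗ₜ[A] p) =
            n ⊗ₜ[A] (P.complex.d (m+1) m p) := rfl
        refine (congrArg (TensorProduct.lift (LinearMap.flip
          ξ.hom)) hw).trans ?_
        simp only [TensorProduct.lift.tmul, LinearMap.flip_apply]
        exact (LinearMap.congr_fun h2 n).trans rfl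
      have := congrArg (fun u => u x) hmap
      exact this
  constructor
  · intro h E hE n hn
    obtain ⟨m, rfl⟩ : ∃ m, n = m + 1 := ⟨n - 1, (Nat.succ_pred_eq_of_pos hn).symm⟩
    exact (key m).1 (h _ hn) E hE
  · intro h n hn
    obtain ⟨m, rfl⟩ : ∃ m, n = m + 1 := ⟨n - 1, (Nat.succ_pred_eq_of_pos hn).symm⟩
    exact (key m).2 (fun E hE => h E hE _ hn)
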